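/- For 2×2 matrices, the ideal I₂ = ⟨x₁₁² + x₁₂² + x₂₁² + x₂₂² − 1, x₁₁x₂₂ − x₁₂x₂₁⟩ ⊆ ℝ[x₁₁,x₁₂,x₂₁,x₂₂] is a prime ideal, and it is real radical (equal to the vanishing ideal of its real variety, the set of rank-≤1 matrices of Frobenius norm 1). -/

import Mathlib

open Polynomial

noncomputable section
namespace Stmt19

/-- The "circle" polynomial `Y² - (1 - X²)` over `D[X]`, as element of `(D[X])[Y]`. -/
def circ (D : Type) [CommRing D] : Polynomial (Polynomial D) :=
  X ^ 2 - C (1 - X ^ 2)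

variable {D : Type} [CommRing D]

lemma circ_monic : (circ D).Monic := by
  unfold circ
  exact monic_X_pow_sub_C _ (by norm_num)

lemma circ_ne_zero [Nontrivial D] : circ D ≠ 0 := circ_monic.ne_zero

lemma circ_degree [Nontrivial D] : (circ D).degree = 2 := by
  unfold circ
  exact degree_X_pow_sub_C (by norm_num) _

/-- `1 - X²` is not of the form `p²/q²` in `D[X]` for a domain `D` with `2 ≠ 0`. -/
lemma no_sqrt [IsDomain D] (h2 : (2 : D) ≠ 0) (p q : Polynomial D)
    (h : p ^ 2 = (1 - X ^ 2) * q ^ 2) (hq : q ≠ 0) : False := by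
  have : Nontrivial D := ⟨2, 0, h2⟩
  have h1X : (1 - X ^ 2 : Polynomial D) ≠ 0 := by
    intro hcon
    have := congrArg (fun r => Polynomial.coeff r 0) hcon
    simp at this
  have hp : p ≠ 0 := by
    intro hp0
    rw [hp0] at h
    exact (mul_ne_zero h1X (pow_ne_zero 2 hq)) (by simpa using h.symm)
  have hfac : (1 - X ^ 2 : Polynomial D) = (X - C 1) * (-(X + C 1)) := by
    rw [map_one]; ring
  have hne1 : ((X : Polynomial D) - C 1) ≠ 0 := X_sub_C_ne_zero 1
  have hne2 : (-(X + C 1) : Polynomial D) ≠ 0 := by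
    intro hcon
    have := congrArg (fun r => Polynomial.coeff r 1) hcon
    simp [coeff_one] at this
  have rmq : rootMultiplicity 1 (q ^ 2) = 2 * rootMultiplicity 1 q := by
    rw [sq, rootMultiplicity_mul (mul_ne_zero hq hq)]; ring
  have e1 : rootMultiplicity 1 (p ^ 2) = 2 * rootMultiplicity 1 p := by
    rw [sq, rootMultiplicity_mul (mul_ne_zero hp hp)]; ring
  have e2 : rootMultiplicity 1 ((1 - X ^ 2) * q ^ 2)
      = 1 + 2 * rootMultiplicity 1 q := by
    have hnr : ¬(-(X + C 1) : Polynomial D).IsRoot 1 := by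
      simp only [IsRoot, eval_neg, eval_add, eval_X, eval_C, neg_eq_zero]
      rw [one_add_one_eq_two]; exact h2
    rw [rootMultiplicity_mul (mul_ne_zero h1X (pow_ne_zero 2 hq)), rmq, hfac,
      rootMultiplicity_mul (mul_ne_zero hne1 hne2),
      rootMultiplicity_X_sub_C_self, rootMultiplicity_eq_zero hnr]
  rw [h, e2] at e1
  omega

/-- `1 - X²` is not a square in the fraction field of `D[X]`. -/
lemma circ_irred [IsDomain D] (h2 : (2 : D) ≠ 0) :
    Irreducible ((circ D).map (algebraMap (Polynomial D) (FractionRing (Polynomial D)))) := by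
  have : Nontrivial D := ⟨2, 0, h2⟩
  set K := FractionRing (Polynomial D)
  set φ := algebraMap (Polynomial D) K
  have hmap : (circ D).map φ = X ^ 2 - C (φ (1 - X ^ 2)) := by
    unfold circ
    simp [Polynomial.map_sub, Polynomial.map_pow]
  rw [hmap]
  apply X_pow_sub_C_irreducible_of_prime Nat.prime_two
  intro b hb
  obtain ⟨p, q, hqmem, rfl⟩ := IsFractionRing.div_surjective (A := Polynomial D) b
  have hq : q ≠ 0 := nonZeroDivisors.ne_zero hqmem
  have hφq : φ q ≠ 0 := by
    simpa using (map_ne_zero_iff φ (IsFractionRing.injective _ _)).mpr hq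
  have hcl : φ (p ^ 2) = φ ((1 - X ^ 2) * q ^ 2) := by
    rw [div_pow, div_eq_iff (pow_ne_zero 2 hφq), map_sub, map_one, map_pow] at hb
    rw [map_mul, map_pow, map_pow, map_sub, map_one, map_pow]
    linear_combination hb
  exact no_sqrt h2 p q (IsFractionRing.injective (Polynomial D) K hcl) hq

/-- A monic polynomial over a domain that is irreducible over the fraction field is prime. -/
lemma prime_of_monic_of_irred {f : Polynomial D} [IsDomain D] (hm : f.Monic)
    (hirr : Irreducible (f.map (algebraMap D (FractionRing D)))) : Prime f := by
  set K := FractionRing D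
  set φ := algebraMap D K
  have hinj : Function.Injective φ := IsFractionRing.injective D K
  have hdesc : ∀ a : Polynomial D, f.map φ ∣ a.map φ → f ∣ a := by
    intro a hdvd
    rw [← modByMonic_eq_zero_iff_dvd hm]
    by_contra hr
    have hrK : (a %ₘ f).map φ ≠ 0 := by
      rwa [Ne, Polynomial.map_eq_zero_iff hinj]
    have hdvdr : f.map φ ∣ (a %ₘ f).map φ := by
      have := modByMonic_add_div a f
      have : (a %ₘ f).map φ = a.map φ - (f.map φ) * ((a /ₘ f).map φ) := by
        rw [← Polynomial.map_mul, ← Polynomial.map_sub]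
        congr 1
        linear_combination this
      rw [this]
      exact dvd_sub hdvd (Dvd.intro _ rfl)
    have hlt : ((a %ₘ f).map φ).degree < (f.map φ).degree := by
      rw [degree_map_eq_of_injective hinj, degree_map_eq_of_injective hinj]
      exact degree_modByMonic_lt a hm
    exact absurd (degree_le_of_dvd hdvdr hrK) (not_le_of_gt hlt)
  have hprime : Prime (f.map φ) := UniqueFactorizationMonoid.irreducible_iff_prime.mp hirr
  refine ⟨hm.ne_zero, ?_, ?_⟩
  · intro hu
    exact hirr.not_isUnit (hu.map (Polynomial.mapRingHom φ))
  · intro a b hab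
    have : f.map φ ∣ (a.map φ) * (b.map φ) := by
      rw [← Polynomial.map_mul]
      exact Polynomial.map_dvd _ hab
    rcases hprime.2.2 _ _ this with h | h
    · exact Or.inl (hdesc a h)
    · exact Or.inr (hdesc b h)

lemma circ_prime [IsDomain D] (h2 : (2 : D) ≠ 0) : Prime (circ D) :=
  prime_of_monic_of_irred circ_monic (circ_irred h2)

lemma adjoinRoot_circ_isDomain [IsDomain D] (h2 : (2 : D) ≠ 0) :
    IsDomain (AdjoinRoot (circ D)) := by
  have : Nontrivial D := ⟨2, 0, h2⟩
  have hprime : (Ideal.span {circ D}).IsPrime :=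
    (Ideal.span_singleton_prime circ_ne_zero).mpr (circ_prime h2)
  exact Ideal.Quotient.isDomain_iff_prime _ |>.mpr hprime

lemma adjoinRoot_circ_two_ne_zero [IsDomain D] (h2 : (2 : D) ≠ 0) :
    (2 : AdjoinRoot (circ D)) ≠ 0 := by
  have : Nontrivial D := ⟨2, 0, h2⟩
  have hCC : (C (C (2 : D)) : Polynomial (Polynomial D)) = 2 := by
    rw [map_ofNat, map_ofNat]
  have h : (2 : AdjoinRoot (circ D)) = AdjoinRoot.mk (circ D) (C (C 2)) := by
    rw [hCC, map_ofNat]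
  rw [h, Ne, AdjoinRoot.mk_eq_zero]
  intro hdvd
  have hC2 : (C (C 2) : Polynomial (Polynomial D)) ≠ 0 := by
    simp [h2]
  have := Polynomial.degree_le_of_dvd hdvd hC2
  rw [circ_degree, degree_C (by simp [h2])] at this
  norm_num at this

/-! ### The tower: two circle rings -/

abbrev CircA : Type := AdjoinRoot (circ ℝ)

instance : IsDomain CircA := adjoinRoot_circ_isDomain (by norm_num)

lemma circA_two_ne_zero : (2 : CircA) ≠ 0 := adjoinRoot_circ_two_ne_zero (by norm_num)

abbrev TT : Type := AdjoinRoot (circ CircA)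

instance : IsDomain TT := adjoinRoot_circ_isDomain circA_two_ne_zero

/-! ### Evaluation homomorphisms at real points of the torus -/

/-- Evaluation of `CircA` at a point `(a, d)` with `d² = 1 - a²`. -/
def chiA (a d : ℝ) (h : d ^ 2 = 1 - a ^ 2) : CircA →+* ℝ :=
  AdjoinRoot.lift (Polynomial.evalRingHom a) d (by
    unfold circ
    simp [h, eval₂_pow])

@[simp] lemma chiA_of (a d : ℝ) (h : d ^ 2 = 1 - a ^ 2) (p : Polynomial ℝ) :
    chiA a d h (AdjoinRoot.of _ p) = p.eval a := by
  simp [chiA]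

@[simp] lemma chiA_root (a d : ℝ) (h : d ^ 2 = 1 - a ^ 2) :
    chiA a d h (AdjoinRoot.root _) = d := by
  simp [chiA]

@[simp] lemma chiA_mk (a d : ℝ) (h : d ^ 2 = 1 - a ^ 2) (p : Polynomial (Polynomial ℝ)) :
    chiA a d h (AdjoinRoot.mk _ p) = p.eval₂ (Polynomial.evalRingHom a) d := by
  simp [chiA]

/-- Evaluation of `TT` at a point `(a, d, b, c)` with `d² = 1 - a²`, `c² = 1 - b²`. -/
def chiT (a d b c : ℝ) (h1 : d ^ 2 = 1 - a ^ 2) (h2 : c ^ 2 = 1 - b ^ 2) : TT →+* ℝ :=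
  AdjoinRoot.lift (Polynomial.eval₂RingHom (chiA a d h1) b) c (by
    rw [show circ CircA = X ^ 2 - C (1 - X ^ 2) from rfl]
    simp [h2, eval₂_pow])

@[simp] lemma chiT_of (a d b c : ℝ) (h1 : d ^ 2 = 1 - a ^ 2) (h2 : c ^ 2 = 1 - b ^ 2)
    (p : Polynomial CircA) :
    chiT a d b c h1 h2 (AdjoinRoot.of _ p) = p.eval₂ (chiA a d h1) b := by
  simp [chiT]

@[simp] lemma chiT_root (a d b c : ℝ) (h1 : d ^ 2 = 1 - a ^ 2) (h2 : c ^ 2 = 1 - b ^ 2) :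
    chiT a d b c h1 h2 (AdjoinRoot.root _) = c := by
  simp [chiT]

@[simp] lemma chiT_mk (a d b c : ℝ) (h1 : d ^ 2 = 1 - a ^ 2) (h2 : c ^ 2 = 1 - b ^ 2)
    (p : Polynomial (Polynomial CircA)) :
    chiT a d b c h1 h2 (AdjoinRoot.mk _ p) = p.eval₂ (Polynomial.eval₂RingHom (chiA a d h1) b) c := by
  simp [chiT]

/-! ### Points separate elements -/

lemma infinite_Ioo : (Set.Ioo (-1 : ℝ) 1).Infinite :=
  Set.infinite_coe_iff.mp (Set.Ioo.infinite (by norm_num))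

lemma separation_A (u : CircA)
    (h : ∀ (a d : ℝ) (h1 : d ^ 2 = 1 - a ^ 2), chiA a d h1 u = 0) : u = 0 := by
  obtain ⟨s, rfl⟩ := AdjoinRoot.mk_surjective (g := circ ℝ) u
  set r := s %ₘ circ ℝ with hr
  have hmk : AdjoinRoot.mk (circ ℝ) s = AdjoinRoot.mk (circ ℝ) r := by
    rw [AdjoinRoot.mk_eq_mk]
    exact ⟨s /ₘ circ ℝ, by linear_combination (modByMonic_add_div s _).symm⟩
  have hdeg : r.degree ≤ 1 := by
    have h2 := degree_modByMonic_lt s (circ_monic (D := ℝ))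
    rw [circ_degree] at h2
    exact Order.le_of_lt_succ (by exact_mod_cast h2)
  have hrform : r = C (r.coeff 1) * X + C (r.coeff 0) := eq_X_add_C_of_degree_le_one hdeg
  have key : ∀ (a d : ℝ), d ^ 2 = 1 - a ^ 2 →
      (r.coeff 1).eval a * d + (r.coeff 0).eval a = 0 := by
    intro a d h1
    have h0 := h a d h1
    rw [hmk] at h0
    rw [chiA_mk] at h0
    rw [hrform] at h0 ⊢
    simpa using h0
  have hvan : ∀ a ∈ Set.Ioo (-1 : ℝ) 1,
      (r.coeff 0).eval a = 0 ∧ (r.coeff 1).eval a = 0 := by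
    intro a ha
    obtain ⟨ha1, ha2⟩ := ha
    have hpos : 0 < 1 - a ^ 2 := by nlinarith
    set d := Real.sqrt (1 - a ^ 2) with hd
    have hdsq : d ^ 2 = 1 - a ^ 2 := Real.sq_sqrt hpos.le
    have hdne : d ≠ 0 := by positivity
    have k1 := key a d hdsq
    have k2 := key a (-d) (by rw [neg_pow]; simpa using hdsq)
    constructor
    · linarith
    · have hmul : (r.coeff 1).eval a * d = 0 := by linarith
      exact (mul_eq_zero.mp hmul).resolve_right hdne
  have hcoeff : ∀ i : ℕ, i ≤ 1 → r.coeff i = 0 := by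
    intro i hi
    apply Polynomial.eq_zero_of_infinite_isRoot
    apply Set.Infinite.mono _ infinite_Ioo
    intro a ha
    interval_cases i
    · exact (hvan a ha).1
    · exact (hvan a ha).2
  rw [hmk, hrform, hcoeff 0 (by norm_num), hcoeff 1 (by norm_num)]
  simp

lemma separation_T (t : TT)
    (h : ∀ (a d b c : ℝ) (h1 : d ^ 2 = 1 - a ^ 2) (h2 : c ^ 2 = 1 - b ^ 2),
      chiT a d b c h1 h2 t = 0) : t = 0 := by
  obtain ⟨s, rfl⟩ := AdjoinRoot.mk_surjective (g := circ CircA) t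
  set r := s %ₘ circ CircA with hr
  have hmk : AdjoinRoot.mk (circ CircA) s = AdjoinRoot.mk (circ CircA) r := by
    rw [AdjoinRoot.mk_eq_mk]
    exact ⟨s /ₘ circ CircA, by linear_combination (modByMonic_add_div s _).symm⟩
  have hdeg : r.degree ≤ 1 := by
    have h2 := degree_modByMonic_lt s (circ_monic (D := CircA))
    rw [circ_degree] at h2
    exact Order.le_of_lt_succ (by exact_mod_cast h2)
  have hrform : r = C (r.coeff 1) * X + C (r.coeff 0) := eq_X_add_C_of_degree_le_one hdeg
  have key : ∀ (a d b c : ℝ) (h1 : d ^ 2 = 1 - a ^ 2), c ^ 2 = 1 - b ^ 2 →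
      ((r.coeff 1).eval₂ (chiA a d h1) b) * c + (r.coeff 0).eval₂ (chiA a d h1) b = 0 := by
    intro a d b c h1 h2
    have h0 := h a d b c h1 h2
    rw [hmk] at h0
    rw [chiT_mk] at h0
    rw [hrform] at h0
    simpa using h0
  have hvan : ∀ (a d : ℝ) (h1 : d ^ 2 = 1 - a ^ 2), ∀ b ∈ Set.Ioo (-1 : ℝ) 1,
      (r.coeff 0).eval₂ (chiA a d h1) b = 0 ∧ (r.coeff 1).eval₂ (chiA a d h1) b = 0 := by
    intro a d h1 b hb
    obtain ⟨hb1, hb2⟩ := hb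
    have hpos : 0 < 1 - b ^ 2 := by nlinarith
    set c := Real.sqrt (1 - b ^ 2) with hc
    have hcsq : c ^ 2 = 1 - b ^ 2 := Real.sq_sqrt hpos.le
    have hcne : c ≠ 0 := by positivity
    have k1 := key a d b c h1 hcsq
    have k2 := key a d b (-c) h1 (by rw [neg_pow]; simpa using hcsq)
    constructor
    · linarith
    · have hmul : (r.coeff 1).eval₂ (chiA a d h1) b * c = 0 := by linarith
      exact (mul_eq_zero.mp hmul).resolve_right hcne
  have hcoeff : ∀ i : ℕ, i ≤ 1 → r.coeff i = 0 := by
    intro i hi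
    apply Polynomial.ext
    intro n
    rw [Polynomial.coeff_zero]
    apply separation_A
    intro a d h1
    have hmapzero : (r.coeff i).map (chiA a d h1) = 0 := by
      apply Polynomial.eq_zero_of_infinite_isRoot
      apply Set.Infinite.mono _ infinite_Ioo
      intro b hb
      have hv := hvan a d h1 b hb
      interval_cases i
      · show Polynomial.eval b _ = 0
        rw [← Polynomial.eval₂_eq_eval_map]
        exact hv.1
      · show Polynomial.eval b _ = 0
        rw [← Polynomial.eval₂_eq_eval_map]
        exact hv.2
    have hcc := congrArg (fun p => Polynomial.coeff p n) hmapzero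
    simpa [Polynomial.coeff_map] using hcc
  rw [hmk, hrform, hcoeff 0 (by norm_num), hcoeff 1 (by norm_num)]
  simp

/-! ### Generators of the torus coordinate ring -/

def u1 : TT := AdjoinRoot.of (circ CircA) (C (AdjoinRoot.of (circ ℝ) X))
def v1 : TT := AdjoinRoot.of (circ CircA) (C (AdjoinRoot.root (circ ℝ)))
def u2 : TT := AdjoinRoot.of (circ CircA) X
def v2 : TT := AdjoinRoot.root (circ CircA)

def cT : ℝ →+* TT :=
  (AdjoinRoot.of (circ CircA)).comp
    ((Polynomial.C : CircA →+* Polynomial CircA).comp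
      ((AdjoinRoot.of (circ ℝ)).comp (Polynomial.C : ℝ →+* Polynomial ℝ)))

lemma rootA_sq :
    (AdjoinRoot.root (circ ℝ)) ^ 2 = 1 - (AdjoinRoot.of (circ ℝ) X) ^ 2 := by
  have h : AdjoinRoot.mk (circ ℝ) (X ^ 2 - C (1 - X ^ 2)) = 0 := AdjoinRoot.mk_self
  simp only [map_sub, map_pow, map_one, AdjoinRoot.mk_X, AdjoinRoot.mk_C] at h
  linear_combination h

lemma v1_sq : v1 ^ 2 = 1 - u1 ^ 2 := by
  unfold v1 u1
  rw [← map_pow, ← map_pow, ← map_pow, ← map_pow, rootA_sq]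
  rw [map_sub, map_sub, map_one, map_one]

lemma v2_sq : v2 ^ 2 = 1 - u2 ^ 2 := by
  unfold v2 u2
  have h : AdjoinRoot.mk (circ CircA) (X ^ 2 - C (1 - X ^ 2)) = 0 := AdjoinRoot.mk_self
  simp only [map_sub, map_pow, map_one, AdjoinRoot.mk_X, AdjoinRoot.mk_C] at h
  linear_combination h

lemma cT_half_two : cT (1/2) * 2 = 1 := by
  rw [show (2 : TT) = cT 2 from (map_ofNat cT 2).symm, ← map_mul]
  norm_num

/-! ### The main homomorphism -/

def gfun : Fin 2 × Fin 2 → TT := fun p =>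
  ![![cT (1/2) * (u1 + u2), cT (1/2) * (v1 + v2)],
    ![cT (1/2) * (v2 - v1), cT (1/2) * (u1 - u2)]] p.1 p.2

@[simp] lemma gfun00 : gfun (0, 0) = cT (1/2) * (u1 + u2) := rfl
@[simp] lemma gfun01 : gfun (0, 1) = cT (1/2) * (v1 + v2) := rfl
@[simp] lemma gfun10 : gfun (1, 0) = cT (1/2) * (v2 - v1) := rfl
@[simp] lemma gfun11 : gfun (1, 1) = cT (1/2) * (u1 - u2) := rfl

def Phi : MvPolynomial (Fin 2 × Fin 2) ℝ →+* TT := MvPolynomial.eval₂Hom cT gfun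

def G1 : MvPolynomial (Fin 2 × Fin 2) ℝ :=
  MvPolynomial.X (0, 0) ^ 2 + MvPolynomial.X (0, 1) ^ 2 +
    MvPolynomial.X (1, 0) ^ 2 + MvPolynomial.X (1, 1) ^ 2 - 1

def G2 : MvPolynomial (Fin 2 × Fin 2) ℝ :=
  MvPolynomial.X (0, 0) * MvPolynomial.X (1, 1) -
    MvPolynomial.X (0, 1) * MvPolynomial.X (1, 0)

def Jspan : Ideal (MvPolynomial (Fin 2 × Fin 2) ℝ) := Ideal.span {G1, G2}

lemma Phi_G1 : Phi G1 = 0 := by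
  unfold Phi G1
  simp only [map_sub, map_add, map_pow, map_one, MvPolynomial.eval₂Hom_X',
    gfun00, gfun01, gfun10, gfun11]
  linear_combination (2 * cT (1/2) ^ 2) * v1_sq + (2 * cT (1/2) ^ 2) * v2_sq +
    (2 * cT (1/2) + 1) * cT_half_two

lemma Phi_G2 : Phi G2 = 0 := by
  unfold Phi G2
  simp only [map_sub, map_mul, MvPolynomial.eval₂Hom_X', gfun00, gfun01, gfun10, gfun11]
  linear_combination (cT (1/2) ^ 2) * v1_sq - (cT (1/2) ^ 2) * v2_sq

/-! ### The section `TT → P/J` -/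

abbrev mkq : MvPolynomial (Fin 2 × Fin 2) ℝ →+* MvPolynomial (Fin 2 × Fin 2) ℝ ⧸ Jspan :=
  Ideal.Quotient.mk Jspan

lemma mem_J_1 : G1 + 2 * G2 ∈ Jspan := by
  apply Ideal.add_mem
  · exact Ideal.subset_span (by simp)
  · exact Ideal.mul_mem_left _ _ (Ideal.subset_span (by simp))

lemma mem_J_2 : G1 - 2 * G2 ∈ Jspan := by
  apply Ideal.sub_mem
  · exact Ideal.subset_span (by simp)
  · exact Ideal.mul_mem_left _ _ (Ideal.subset_span (by simp))

def psi0 : Polynomial ℝ →+* MvPolynomial (Fin 2 × Fin 2) ℝ ⧸ Jspan :=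
  Polynomial.eval₂RingHom (mkq.comp (MvPolynomial.C : ℝ →+* _))
    (mkq (MvPolynomial.X (0, 0) + MvPolynomial.X (1, 1)))

lemma psi0_root_rel :
    (circ ℝ).eval₂ psi0 (mkq (MvPolynomial.X (0, 1) - MvPolynomial.X (1, 0))) = 0 := by
  unfold circ
  rw [eval₂_sub, eval₂_pow, eval₂_X, eval₂_C]
  unfold psi0
  rw [Polynomial.coe_eval₂RingHom, eval₂_sub, eval₂_one, eval₂_pow, eval₂_X]
  rw [← map_pow, ← map_pow, ← map_one mkq, ← map_sub, ← map_sub]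
  rw [Ideal.Quotient.eq_zero_iff_mem]
  have : (MvPolynomial.X (0, 1) - MvPolynomial.X (1, 0)) ^ 2 -
      (1 - (MvPolynomial.X (0, 0) + MvPolynomial.X (1, 1)) ^ 2) = G1 + 2 * G2 := by
    unfold G1 G2; ring
  rw [this]
  exact mem_J_1

def psiA : CircA →+* MvPolynomial (Fin 2 × Fin 2) ℝ ⧸ Jspan :=
  AdjoinRoot.lift psi0 (mkq (MvPolynomial.X (0, 1) - MvPolynomial.X (1, 0))) psi0_root_rel

def psi1 : Polynomial CircA →+* MvPolynomial (Fin 2 × Fin 2) ℝ ⧸ Jspan :=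
  Polynomial.eval₂RingHom psiA (mkq (MvPolynomial.X (0, 0) - MvPolynomial.X (1, 1)))

lemma psi1_root_rel :
    (circ CircA).eval₂ psi1 (mkq (MvPolynomial.X (0, 1) + MvPolynomial.X (1, 0))) = 0 := by
  rw [show circ CircA = X ^ 2 - C (1 - X ^ 2) from rfl]
  rw [eval₂_sub, eval₂_pow, eval₂_X, eval₂_C]
  unfold psi1
  rw [Polynomial.coe_eval₂RingHom, eval₂_sub, eval₂_one, eval₂_pow, eval₂_X]
  rw [← map_pow, ← map_pow, ← map_one mkq, ← map_sub, ← map_sub]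
  rw [Ideal.Quotient.eq_zero_iff_mem]
  have : (MvPolynomial.X (0, 1) + MvPolynomial.X (1, 0)) ^ 2 -
      (1 - (MvPolynomial.X (0, 0) - MvPolynomial.X (1, 1)) ^ 2) = G1 - 2 * G2 := by
    unfold G1 G2; ring
  rw [this]
  exact mem_J_2

def psi : TT →+* MvPolynomial (Fin 2 × Fin 2) ℝ ⧸ Jspan :=
  AdjoinRoot.lift psi1 (mkq (MvPolynomial.X (0, 1) + MvPolynomial.X (1, 0))) psi1_root_rel

@[simp] lemma psi_u1 : psi u1 = mkq (MvPolynomial.X (0, 0) + MvPolynomial.X (1, 1)) := by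
  unfold psi u1
  rw [AdjoinRoot.lift_of]
  unfold psi1
  rw [Polynomial.coe_eval₂RingHom, eval₂_C]
  unfold psiA
  rw [AdjoinRoot.lift_of]
  unfold psi0
  rw [Polynomial.coe_eval₂RingHom, eval₂_X]

@[simp] lemma psi_v1 : psi v1 = mkq (MvPolynomial.X (0, 1) - MvPolynomial.X (1, 0)) := by
  unfold psi v1
  rw [AdjoinRoot.lift_of]
  unfold psi1
  rw [Polynomial.coe_eval₂RingHom, eval₂_C]
  unfold psiA
  rw [AdjoinRoot.lift_root]

@[simp] lemma psi_u2 : psi u2 = mkq (MvPolynomial.X (0, 0) - MvPolynomial.X (1, 1)) := by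
  unfold psi u2
  rw [AdjoinRoot.lift_of]
  unfold psi1
  rw [Polynomial.coe_eval₂RingHom, eval₂_X]

@[simp] lemma psi_v2 : psi v2 = mkq (MvPolynomial.X (0, 1) + MvPolynomial.X (1, 0)) := by
  unfold psi v2
  rw [AdjoinRoot.lift_root]

@[simp] lemma psi_cT (r : ℝ) : psi (cT r) = mkq (MvPolynomial.C r) := by
  unfold psi cT
  rw [RingHom.comp_apply, AdjoinRoot.lift_of]
  unfold psi1
  rw [RingHom.comp_apply, RingHom.comp_apply, Polynomial.coe_eval₂RingHom, eval₂_C]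
  unfold psiA
  rw [AdjoinRoot.lift_of]
  unfold psi0
  rw [Polynomial.coe_eval₂RingHom, eval₂_C, RingHom.comp_apply]

lemma C_half_two : (MvPolynomial.C (1/2 : ℝ) : MvPolynomial (Fin 2 × Fin 2) ℝ) * 2 = 1 := by
  rw [show (2 : MvPolynomial (Fin 2 × Fin 2) ℝ) = MvPolynomial.C (2 : ℝ) from
    (map_ofNat (MvPolynomial.C : ℝ →+* _) 2).symm, ← map_mul]
  norm_num

lemma psi_comp_Phi : psi.comp Phi = mkq := by
  apply MvPolynomial.ringHom_ext
  · intro r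
    rw [RingHom.comp_apply]
    unfold Phi
    rw [MvPolynomial.eval₂Hom_C, psi_cT]
  · rintro ⟨i, j⟩
    rw [RingHom.comp_apply]
    unfold Phi
    rw [MvPolynomial.eval₂Hom_X']
    fin_cases i <;> fin_cases j
    · show psi (gfun (0, 0)) = mkq (MvPolynomial.X (0, 0))
      rw [gfun00, map_mul, map_add, psi_cT, psi_u1, psi_u2, ← map_add, ← map_mul]
      exact congrArg (⇑mkq) (by linear_combination MvPolynomial.X ((0,0) : Fin 2 × Fin 2) * C_half_two)
    · show psi (gfun (0, 1)) = mkq (MvPolynomial.X (0, 1))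
      rw [gfun01, map_mul, map_add, psi_cT, psi_v1, psi_v2, ← map_add, ← map_mul]
      exact congrArg (⇑mkq) (by linear_combination MvPolynomial.X ((0,1) : Fin 2 × Fin 2) * C_half_two)
    · show psi (gfun (1, 0)) = mkq (MvPolynomial.X (1, 0))
      rw [gfun10, map_mul, map_sub, psi_cT, psi_v1, psi_v2, ← map_sub, ← map_mul]
      exact congrArg (⇑mkq) (by linear_combination MvPolynomial.X ((1,0) : Fin 2 × Fin 2) * C_half_two)
    · show psi (gfun (1, 1)) = mkq (MvPolynomial.X (1, 1))
      rw [gfun11, map_mul, map_sub, psi_cT, psi_u1, psi_u2, ← map_sub, ← map_mul]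
      exact congrArg (⇑mkq) (by linear_combination MvPolynomial.X ((1,1) : Fin 2 × Fin 2) * C_half_two)

/-! ### Evaluations of the generators -/

variable (a d b c : ℝ) (h1 : d ^ 2 = 1 - a ^ 2) (h2 : c ^ 2 = 1 - b ^ 2)

@[simp] lemma chiT_u1 : chiT a d b c h1 h2 u1 = a := by
  unfold u1
  rw [chiT_of, eval₂_C, chiA_of, eval_X]

@[simp] lemma chiT_v1 : chiT a d b c h1 h2 v1 = d := by
  unfold v1
  rw [chiT_of, eval₂_C, chiA_root]

@[simp] lemma chiT_u2 : chiT a d b c h1 h2 u2 = b := by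
  unfold u2
  rw [chiT_of, eval₂_X]

@[simp] lemma chiT_v2 : chiT a d b c h1 h2 v2 = c := by
  unfold v2
  rw [chiT_root]

@[simp] lemma chiT_cT (r : ℝ) : chiT a d b c h1 h2 (cT r) = r := by
  unfold cT
  rw [RingHom.comp_apply, RingHom.comp_apply, RingHom.comp_apply, chiT_of, eval₂_C,
    chiA_of, eval_C]

/-- The point of the torus (in matrix coordinates). -/
def pt : Fin 2 × Fin 2 → ℝ := fun p =>
  ![![(a + b)/2, (c + d)/2], ![(c - d)/2, (a - b)/2]] p.1 p.2

lemma chiT_comp_Phi :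
    (chiT a d b c h1 h2).comp Phi = MvPolynomial.eval (pt a d b c) := by
  apply MvPolynomial.ringHom_ext
  · intro r
    rw [RingHom.comp_apply]
    unfold Phi
    rw [MvPolynomial.eval₂Hom_C, chiT_cT, MvPolynomial.eval_C]
  · rintro ⟨i, j⟩
    rw [RingHom.comp_apply]
    unfold Phi
    rw [MvPolynomial.eval₂Hom_X', MvPolynomial.eval_X]
    fin_cases i <;> fin_cases j
    · show chiT a d b c h1 h2 (gfun (0, 0)) = pt a d b c (0, 0)
      rw [gfun00, map_mul, map_add, chiT_cT, chiT_u1, chiT_u2]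
      show _ = (a + b)/2
      ring
    · show chiT a d b c h1 h2 (gfun (0, 1)) = pt a d b c (0, 1)
      rw [gfun01, map_mul, map_add, chiT_cT, chiT_v1, chiT_v2]
      show _ = (c + d)/2
      ring
    · show chiT a d b c h1 h2 (gfun (1, 0)) = pt a d b c (1, 0)
      rw [gfun10, map_mul, map_sub, chiT_cT, chiT_v1, chiT_v2]
      show _ = (c - d)/2
      ring
    · show chiT a d b c h1 h2 (gfun (1, 1)) = pt a d b c (1, 1)
      rw [gfun11, map_mul, map_sub, chiT_cT, chiT_u1, chiT_u2]
      show _ = (a - b)/2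
      ring

/-! ### The kernel of `Phi` -/

lemma ker_Phi : RingHom.ker Phi = Jspan := by
  apply le_antisymm
  · intro f hf
    rw [RingHom.mem_ker] at hf
    have h := congrArg (fun g => g f) psi_comp_Phi
    simp only [RingHom.comp_apply] at h
    rw [hf, map_zero] at h
    exact (Ideal.Quotient.eq_zero_iff_mem).mp h.symm
  · rw [Jspan, Ideal.span_le]
    rintro p hp
    simp only [Set.mem_insert_iff, Set.mem_singleton_iff] at hp
    rcases hp with rfl | rfl
    · rw [SetLike.mem_coe, RingHom.mem_ker]; exact Phi_G1
    · rw [SetLike.mem_coe, RingHom.mem_ker]; exact Phi_G2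

lemma J_isPrime : Jspan.IsPrime := ker_Phi ▸ RingHom.ker_isPrime Phi

lemma pt_mem_zeroLocus (hd : d ^ 2 = 1 - a ^ 2) (hc : c ^ 2 = 1 - b ^ 2) :
    pt a d b c ∈ MvPolynomial.zeroLocus ℝ Jspan := by
  rw [MvPolynomial.mem_zeroLocus_iff]
  intro p hp
  have hle : Jspan ≤ RingHom.ker (MvPolynomial.eval (pt a d b c)) := by
    rw [Jspan, Ideal.span_le]
    rintro q hq
    simp only [Set.mem_insert_iff, Set.mem_singleton_iff] at hq
    rcases hq with rfl | rfl
    · rw [SetLike.mem_coe, RingHom.mem_ker]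
      unfold G1
      simp only [map_sub, map_add, map_pow, map_one, MvPolynomial.eval_X]
      show ((a + b)/2) ^ 2 + ((c + d)/2) ^ 2 + ((c - d)/2) ^ 2 + ((a - b)/2) ^ 2 - 1 = 0
      linear_combination (1/2 : ℝ) * hd + (1/2 : ℝ) * hc
    · rw [SetLike.mem_coe, RingHom.mem_ker]
      unfold G2
      simp only [map_sub, map_mul, MvPolynomial.eval_X]
      show ((a + b)/2) * ((a - b)/2) - ((c + d)/2) * ((c - d)/2) = 0
      linear_combination (1/4 : ℝ) * hd - (1/4 : ℝ) * hc
  exact hle hp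

lemma J_vanishing :
    MvPolynomial.vanishingIdeal ℝ (MvPolynomial.zeroLocus ℝ Jspan) = Jspan := by
  apply le_antisymm
  · intro f hf
    rw [MvPolynomial.mem_vanishingIdeal_iff] at hf
    rw [← ker_Phi, RingHom.mem_ker]
    apply separation_T
    intro a d b c h1 h2
    have hcomp := congrArg (fun g => g f) (chiT_comp_Phi a d b c h1 h2)
    simp only [RingHom.comp_apply] at hcomp
    rw [hcomp]
    exact hf _ (pt_mem_zeroLocus a d b c h1 h2)
  · exact MvPolynomial.le_vanishingIdeal_zeroLocus _

end Stmt19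
end

/-- For `2×2` matrices, `I₂ = ⟨x₁₁² + x₁₂² + x₂₁² + x₂₂² − 1, x₁₁x₂₂ − x₁₂x₂₁⟩` is a
prime ideal and is real radical: it equals the vanishing ideal of its real variety. -/
theorem stmt_19 (I₂ : Ideal (MvPolynomial (Fin 2 × Fin 2) ℝ))
    (hI₂ : I₂ = Ideal.span
      {(MvPolynomial.X (0, 0)) ^ 2 + (MvPolynomial.X (0, 1)) ^ 2 +
        (MvPolynomial.X (1, 0)) ^ 2 + (MvPolynomial.X (1, 1)) ^ 2 - 1,
       MvPolynomial.X (0, 0) * MvPolynomial.X (1, 1) -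
        MvPolynomial.X (0, 1) * MvPolynomial.X (1, 0)}) :
    I₂.IsPrime ∧ MvPolynomial.vanishingIdeal ℝ (MvPolynomial.zeroLocus ℝ I₂) = I₂ := by
  have hJ : I₂ = Stmt19.Jspan := hI₂
  rw [hJ]
  exact ⟨Stmt19.J_isPrime, Stmt19.J_vanishing⟩
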